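/- Let X ⊆ ℝ^d be measurable with 0 < λ(X) < ∞, let r > 0, and let X_1, …, X_n (n ≥ 1) be i.i.d. random points uniformly distributed on X. Suppose there is c ∈ (0,1] such that λ(B̄(x,r) ∩ X) ≥ c · λ(X) for all x ∈ X. Call X_i isolated if ‖X_j − X_i‖ > r for all j ≠ i, and let N denote the number of isolated points. Then E[N] ≤ n (1 − c)^{n−1}. -/

import Mathlib

open MeasureTheory ProbabilityTheory
open scoped ENNReal Classical

/-- The uniform probability measure on a set `X` of positive finite volume. -/
noncomputable def uniformOnSet (d : ℕ) (X : Set (EuclideanSpace ℝ (Fin d))) :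
    Measure (EuclideanSpace ℝ (Fin d)) :=
  (volume X)⁻¹ • volume.restrict X

/-- If every ball of radius `r` centered in `X` captures at least a fraction `c` of the
volume of `X`, the expected number of isolated points among `n` i.i.d. uniform samples is
at most `n (1 - c)^(n-1)`. -/
theorem expected_isolated_points_le (d n : ℕ) (hn : 1 ≤ n)
    (X : Set (EuclideanSpace ℝ (Fin d))) (hX : MeasurableSet X)
    (hX0 : 0 < volume X) (hXfin : volume X < ⊤)
    (r : ℝ) (hr : 0 < r)
    (c : ℝ) (hc : c ∈ Set.Ioc (0:ℝ) 1)
    (hball : ∀ x ∈ X, ENNReal.ofReal c * volume X ≤ volume (Metric.closedBall x r ∩ X))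
    (Ω : Type) (mΩ : MeasurableSpace Ω) (P : Measure Ω) (hP : IsProbabilityMeasure P)
    (Y : Fin n → Ω → EuclideanSpace ℝ (Fin d))
    (hmeas : ∀ j, Measurable (Y j))
    (hindep : iIndepFun Y P)
    (hlaw : ∀ j, Measure.map (Y j) P = uniformOnSet d X) :
    ∫⁻ ω, ((Finset.univ.filter (fun i : Fin n =>
          ∀ j : Fin n, j ≠ i → r < ‖Y j ω - Y i ω‖)).card : ℝ≥0∞) ∂P ≤
      (n : ℝ≥0∞) * ENNReal.ofReal ((1 - c) ^ (n - 1)) := by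
  set μ : Measure (EuclideanSpace ℝ (Fin d)) := uniformOnSet d X with hμdef
  have hμapp : ∀ s : Set (EuclideanSpace ℝ (Fin d)), MeasurableSet s → μ s = (volume X)⁻¹ * volume (s ∩ X) := by
    intro s hs
    simp [hμdef, uniformOnSet, Measure.restrict_apply hs]
  have hvol1 : (volume X)⁻¹ * volume X = 1 :=
    ENNReal.inv_mul_cancel hX0.ne' hXfin.ne
  have hprobμ : IsProbabilityMeasure μ := by
    constructor
    rw [hμapp Set.univ MeasurableSet.univ, Set.univ_inter, hvol1]
  -- a.e. point of μ is in X
  have haeX : ∀ᵐ a ∂μ, a ∈ X := by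
    rw [MeasureTheory.ae_iff]
    have : {a : EuclideanSpace ℝ (Fin d) | ¬ a ∈ X} = Xᶜ := rfl
    rw [this, hμapp Xᶜ hX.compl, Set.compl_inter_self, measure_empty, mul_zero]
  -- the complement of a closed ball
  set C : EuclideanSpace ℝ (Fin d) → Set (EuclideanSpace ℝ (Fin d)) := fun a => {y : EuclideanSpace ℝ (Fin d) | r < ‖y - a‖} with hCdef
  have hCmeas : ∀ a, MeasurableSet (C a) :=
    fun a => measurableSet_lt measurable_const ((measurable_id.sub measurable_const).norm)
  have hCcompl : ∀ a, C a = (Metric.closedBall a r)ᶜ := by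
    intro a
    ext y
    simp [hCdef, Metric.mem_closedBall, dist_eq_norm, not_le, lt_iff_lt_of_le_iff_le]
  have hCle : ∀ a ∈ X, μ (C a) ≤ ENNReal.ofReal (1 - c) := by
    intro a ha
    have hball' : ENNReal.ofReal c ≤ μ (Metric.closedBall a r) := by
      rw [hμapp _ measurableSet_closedBall]
      calc ENNReal.ofReal c = (volume X)⁻¹ * (ENNReal.ofReal c * volume X) := by
            rw [mul_comm (ENNReal.ofReal c), ← mul_assoc, hvol1, one_mul]
        _ ≤ (volume X)⁻¹ * volume (Metric.closedBall a r ∩ X) :=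
            mul_le_mul_right (hball a ha) _
    have hcompl : μ (C a) = 1 - μ (Metric.closedBall a r) := by
      rw [hCcompl a, measure_compl measurableSet_closedBall
        (measure_ne_top μ _), measure_univ]
    rw [hcompl, show ENNReal.ofReal (1 - c) = 1 - ENNReal.ofReal c by
      rw [ENNReal.ofReal_sub 1 hc.1.le, ENNReal.ofReal_one]]
    exact tsub_le_tsub_left hball' 1
  -- the key probability bound for each index i
  have key : ∀ i : Fin n,
      P {ω | ∀ j : Fin n, j ≠ i → r < ‖Y j ω - Y i ω‖} ≤
        ENNReal.ofReal ((1 - c) ^ (n - 1)) := by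
    intro i
    classical
    set T : Finset (Fin n) := Finset.univ.erase i with hTdef
    have hcardT : T.card = n - 1 := by
      simp [hTdef, Finset.card_erase_of_mem]
    -- the tuple of the other variables
    set G : Ω → (T → EuclideanSpace ℝ (Fin d)) := fun ω k => Y k ω with hGdef
    have hG : Measurable G := measurable_pi_lambda _ fun k => hmeas k
    set ν : Measure (T → EuclideanSpace ℝ (Fin d)) := P.map G with hνdef
    have hprobν : IsProbabilityMeasure ν := Measure.isProbabilityMeasure_map hG.aemeasurable
    -- independence of Y i and G
    have hIF : IndepFun (Y i) G P := by
      have h1 := hindep.indepFun_finset {i} T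
        (by simp [hTdef]) hmeas
      have h2 := h1.comp (φ := fun v : (({i} : Finset (Fin n)) → EuclideanSpace ℝ (Fin d)) =>
        v ⟨i, Finset.mem_singleton_self i⟩) (ψ := id)
        (show Measurable (fun v : (({i} : Finset (Fin n)) → EuclideanSpace ℝ (Fin d)) =>
          v ⟨i, Finset.mem_singleton_self i⟩) from measurable_pi_apply _) measurable_id
      simpa [Function.comp_def] using h2
    have hpair : P.map (fun ω => (Y i ω, G ω)) = μ.prod ν := by
      rw [← hlaw i]
      exact (indepFun_iff_map_prod_eq_prod_map_map (hmeas i).aemeasurable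
        hG.aemeasurable).mp hIF
    -- the target set in the product space
    set T' : Set (EuclideanSpace ℝ (Fin d) × (T → EuclideanSpace ℝ (Fin d))) := {p | ∀ k : T, r < ‖p.2 k - p.1‖} with hT'def
    have hT'meas : MeasurableSet T' := by
      have : T' = ⋂ k : T, {p : EuclideanSpace ℝ (Fin d) × (T → EuclideanSpace ℝ (Fin d)) | r < ‖p.2 k - p.1‖} := by
        ext p; simp [hT'def]
      rw [this]
      exact MeasurableSet.iInter fun k =>
        measurableSet_lt measurable_const (by fun_prop)
    have hsetrw : {ω | ∀ j : Fin n, j ≠ i → r < ‖Y j ω - Y i ω‖} =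
        (fun ω => (Y i ω, G ω)) ⁻¹' T' := by
      ext ω
      simp only [Set.mem_setOf_eq, Set.mem_preimage, hT'def, hGdef]
      constructor
      · intro h k
        exact h k (Finset.ne_of_mem_erase k.2)
      · intro h j hj
        exact h ⟨j, Finset.mem_erase.mpr ⟨hj, Finset.mem_univ j⟩⟩
    rw [hsetrw, ← Measure.map_apply ((hmeas i).prodMk hG) hT'meas, hpair,
      Measure.prod_apply hT'meas]
    -- bound the slice for a ∈ X
    have hslice : ∀ a ∈ X, ν (Prod.mk a ⁻¹' T') ≤ ENNReal.ofReal ((1 - c) ^ (n - 1)) := by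
      intro a ha
      have hpre : G ⁻¹' (Prod.mk a ⁻¹' T') = ⋂ j ∈ T, Y j ⁻¹' (C a) := by
        ext ω
        simp only [Set.mem_preimage, Set.mem_setOf_eq, hT'def, hGdef, Set.mem_iInter,
          hCdef]
        constructor
        · intro h j hj
          exact h ⟨j, hj⟩
        · intro h k
          exact h k k.2
      have hνslice : ν (Prod.mk a ⁻¹' T') = ∏ j ∈ T, μ (C a) := by
        rw [hνdef, Measure.map_apply hG (measurable_prodMk_left hT'meas), hpre,
          hindep.measure_inter_preimage_eq_mul T (sets := fun _ => C a)
            (fun _ _ => hCmeas a)]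
        refine Finset.prod_congr rfl fun j _ => ?_
        rw [← Measure.map_apply (hmeas j) (hCmeas a), hlaw j]
      rw [hνslice, Finset.prod_const, hcardT]
      calc μ (C a) ^ (n - 1) ≤ (ENNReal.ofReal (1 - c)) ^ (n - 1) :=
            pow_le_pow_left' (hCle a ha) _
        _ = ENNReal.ofReal ((1 - c) ^ (n - 1)) :=
            (ENNReal.ofReal_pow (by linarith [hc.2]) _).symm
    calc ∫⁻ a, ν (Prod.mk a ⁻¹' T') ∂μ
        ≤ ∫⁻ _, ENNReal.ofReal ((1 - c) ^ (n - 1)) ∂μ := by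
          refine lintegral_mono_ae ?_
          filter_upwards [haeX] with a ha using hslice a ha
      _ = ENNReal.ofReal ((1 - c) ^ (n - 1)) := by
          rw [lintegral_const, measure_univ, mul_one]
  -- rewrite the integrand as a sum of indicators
  have hiso : ∀ i : Fin n,
      MeasurableSet {ω | ∀ j : Fin n, j ≠ i → r < ‖Y j ω - Y i ω‖} := by
    intro i
    have : {ω | ∀ j : Fin n, j ≠ i → r < ‖Y j ω - Y i ω‖} =
        ⋂ j : Fin n, ⋂ _ : j ≠ i, {ω | r < ‖Y j ω - Y i ω‖} := by
      ext ω; simp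
    rw [this]
    exact MeasurableSet.iInter fun j => MeasurableSet.iInter fun _ =>
      measurableSet_lt measurable_const ((hmeas j).sub (hmeas i)).norm
  have hcount : ∀ ω, ((Finset.univ.filter (fun i : Fin n =>
        ∀ j : Fin n, j ≠ i → r < ‖Y j ω - Y i ω‖)).card : ℝ≥0∞) =
      ∑ i : Fin n, Set.indicator {ω | ∀ j : Fin n, j ≠ i → r < ‖Y j ω - Y i ω‖}
        (fun _ => (1 : ℝ≥0∞)) ω := by
    intro ω
    rw [Finset.card_filter]
    push_cast
    refine Finset.sum_congr rfl fun i _ => ?_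
    by_cases h : ∀ j : Fin n, j ≠ i → r < ‖Y j ω - Y i ω‖ <;>
      simp [Set.indicator, h]
  calc ∫⁻ ω, ((Finset.univ.filter (fun i : Fin n =>
          ∀ j : Fin n, j ≠ i → r < ‖Y j ω - Y i ω‖)).card : ℝ≥0∞) ∂P
      = ∑ i : Fin n, ∫⁻ ω, Set.indicator
          {ω | ∀ j : Fin n, j ≠ i → r < ‖Y j ω - Y i ω‖} (fun _ => (1 : ℝ≥0∞)) ω ∂P := by
        rw [← lintegral_finset_sum]
        · exact lintegral_congr fun ω => hcount ω
        · exact fun i _ => (measurable_const.indicator (hiso i))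
    _ = ∑ i : Fin n, P {ω | ∀ j : Fin n, j ≠ i → r < ‖Y j ω - Y i ω‖} := by
        refine Finset.sum_congr rfl fun i _ => ?_
        rw [lintegral_indicator_const (hiso i), one_mul]
    _ ≤ ∑ _i : Fin n, ENNReal.ofReal ((1 - c) ^ (n - 1)) :=
        Finset.sum_le_sum fun i _ => key i
    _ = (n : ℝ≥0∞) * ENNReal.ofReal ((1 - c) ^ (n - 1)) := by
        rw [Finset.sum_const, Finset.card_univ, Fintype.card_fin, nsmul_eq_mul]
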